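/- Let Ω ⊂ ℍₛⁿ be open in the Euclidean (subspace) topology τ(ℍₛⁿ) and a slice-domain with Ω ∩ ℝⁿ ≠ ∅. Then Ω is self-stem-preserving, i.e., Ω is real-path-connected and Ω-stem-preserving: (i) for every γ ∈ 𝒫(ℂⁿ, Ω), |𝕊(Ω, γ)| ≥ 2; (ii) for all α, β ∈ 𝒫(ℂⁿ, Ω) with α(1) = β(1), |𝕊(Ω, α) ∩ 𝕊(Ω, β)| ≠ 1. -/

import Mathlib

noncomputable section
open Quaternion Matrix

abbrev Hq := Quaternion ℝ

/-- The set of quaternionic imaginary units. -/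
def Sph : Set Hq := {I | I ^ 2 = -1}

/-- `Ψ_i^I` applied to a single complex number: `x + y i ↦ x + y I`. -/
def psi (I : Hq) (z : ℂ) : Hq := (z.re : Hq) + z.im • I

/-- `Ψ_i^I : ℂⁿ → ℂ_Iⁿ`, componentwise. -/
def liftMap {n : ℕ} (I : Hq) (z : Fin n → ℂ) : Fin n → Hq := fun k => psi I (z k)

/-- The weakly slice cone `Hqₛⁿ = ⋃_{I∈𝕊} ℂ_Iⁿ`. -/
def HSn (n : ℕ) : Set (Fin n → Hq) := {q | ∃ I ∈ Sph, ∃ z : Fin n → ℂ, q = liftMap I z}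

/-- A point of `ℂⁿ` is real. -/
def isRealPt {n : ℕ} (z : Fin n → ℂ) : Prop := ∀ k, (z k).im = 0

/-- A point of `Hqⁿ` is real. -/
def isRealH {n : ℕ} (q : Fin n → Hq) : Prop := ∀ k, q k = ((q k).re : Hq)

/-- The lifted path `γ^I = Ψ_i^I ∘ γ`. -/
def liftP {n : ℕ} (γ : C(unitInterval, Fin n → ℂ)) (I : Hq) (t : unitInterval) : Fin n → Hq :=
  liftMap I (γ t)

/-- `𝕊(Ω, γ) = {I ∈ 𝕊 : γ^I ⊂ Ω}`. -/
def SUnits {n : ℕ} (Ω : Set (Fin n → Hq)) (γ : C(unitInterval, Fin n → ℂ)) : Set Hq :=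
  {I | I ∈ Sph ∧ ∀ t, liftP γ I t ∈ Ω}

/-- `𝒫(ℂⁿ, Ω)`: continuous paths starting in `ℝⁿ` with some lift inside `Ω`. -/
def PathsTo {n : ℕ} (Ω : Set (Fin n → Hq)) : Set C(unitInterval, Fin n → ℂ) :=
  {γ | isRealPt (γ 0) ∧ ∃ I, I ∈ SUnits Ω γ}

/-- `F` is a path-slice stem function of `f` on `Ω`:
`f(γ^I(1)) = (1, I)·F(γ)`. -/
def IsStem {n : ℕ} (Ω : Set (Fin n → Hq)) (f : (Fin n → Hq) → Hq)
    (F : C(unitInterval, Fin n → ℂ) → Fin 2 → Hq) : Prop :=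
  ∀ γ ∈ PathsTo Ω, ∀ I ∈ SUnits Ω γ, f (liftP γ I 1) = F γ 0 + I * F γ 1

/-- `f` is path-slice on `Ω`. -/
def IsPathSlice {n : ℕ} (Ω : Set (Fin n → Hq)) (f : (Fin n → Hq) → Hq) : Prop :=
  ∃ F, IsStem Ω f F

/-- `Ω` is real-path-connected. -/
def RealPathConnected {n : ℕ} (Ω : Set (Fin n → Hq)) : Prop :=
  ∀ q ∈ Ω, ∃ γ ∈ PathsTo Ω, ∃ I ∈ SUnits Ω γ, liftP γ I 1 = q

/-- `Ω₂` is `Ω₁`-stem-preserving: (i) every path of `𝒫(ℂⁿ,Ω₁)` has at least two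
units in `𝕊(Ω₂,γ)`; (ii) two paths with the same endpoint share `≠ 1` units. -/
def StemPreserving {n : ℕ} (Ω₁ Ω₂ : Set (Fin n → Hq)) : Prop :=
  (∀ γ ∈ PathsTo Ω₁, ∃ I ∈ SUnits Ω₂ γ, ∃ J ∈ SUnits Ω₂ γ, I ≠ J) ∧
  (∀ α ∈ PathsTo Ω₁, ∀ β ∈ PathsTo Ω₁, α 1 = β 1 →
    ∀ I ∈ SUnits Ω₂ α ∩ SUnits Ω₂ β, ∃ J ∈ SUnits Ω₂ α ∩ SUnits Ω₂ β, J ≠ I)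

/-- The formula `((1,I),(1,J))⁻¹ (f(γ^I(1)), f(γ^J(1)))ᵀ`. -/
def stemFormula {n : ℕ} (f : (Fin n → Hq) → Hq) (γ : C(unitInterval, Fin n → ℂ)) (I J : Hq) :
    Fin 2 → Hq :=
  ((I - J)⁻¹ • !![I, -J; (1 : Hq), -1]).mulVec ![f (liftP γ I 1), f (liftP γ J 1)]

/-- The sub-stem function `F_{Ω₁}^f` (depends only on `Ω₂` and `f`). -/
noncomputable def subStem {n : ℕ} (Ω₂ : Set (Fin n → Hq)) (f : (Fin n → Hq) → Hq)
    (γ : C(unitInterval, Fin n → ℂ)) : Fin 2 → Hq := by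
  classical
  exact if h : ∃ p : Hq × Hq, p.1 ∈ SUnits Ω₂ γ ∧ p.2 ∈ SUnits Ω₂ γ ∧ p.1 ≠ p.2
    then stemFormula f γ h.choose.1 h.choose.2
    else 0

/-- Normalized imaginary part of a quaternion. -/
def imUnit (a : Hq) : Hq := (‖a - (a.re : Hq)‖)⁻¹ • (a - (a.re : Hq))

/-- The map `𝔍 : Hqₛⁿ → 𝕊 ∪ {0}`. -/
noncomputable def Jmap {n : ℕ} (q : Fin n → Hq) : Hq := by
  classical
  exact if h : ∃ k : Fin n, q k ≠ ((q k).re : Hq) then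
    imUnit (q ((Finset.univ.filter fun k => q k ≠ ((q k).re : Hq)).min'
      ⟨h.choose, Finset.mem_filter.2 ⟨Finset.mem_univ _, h.choose_spec⟩⟩))
  else 0

/-- Componentwise complex conjugate of a path. -/
def conjPath {n : ℕ} (γ : C(unitInterval, Fin n → ℂ)) : C(unitInterval, Fin n → ℂ) :=
  ⟨fun t k => star (γ t k),
    continuous_pi fun k => continuous_star.comp ((continuous_apply k).comp γ.continuous)⟩

/-- The point-form sub-stem function `ℱ_{Ω₁}^f : Ω₁ → Hq^{2×1}`. -/
noncomputable def pointStem {n : ℕ} (Ω₁ Ω₂ : Set (Fin n → Hq)) (f : (Fin n → Hq) → Hq)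
    (q : Fin n → Hq) : Fin 2 → Hq := by
  classical
  exact if isRealH q then ![f q, 0]
    else if h : ∃ γ, γ ∈ PathsTo Ω₁ ∧ (∀ t, liftP γ (Jmap q) t ∈ Ω₁) ∧ liftP γ (Jmap q) 1 = q
    then subStem Ω₂ f h.choose
    else 0

/-- The `*`-product of functions: `(f*g)(q) = (f(q), 𝔍(q)f(q)) · ℱ_{Ω₁}^g(q)`. -/
noncomputable def starProd {n : ℕ} (Ω₁ Ω₂ : Set (Fin n → Hq)) (f g : (Fin n → Hq) → Hq)
    (q : Fin n → Hq) : Hq :=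
  f q * pointStem Ω₁ Ω₂ g q 0 + (Jmap q * f q) * pointStem Ω₁ Ω₂ g q 1

/-- The `*`-product on `Hq^{2×1}` coming from `Hq ⊗_ℝ ℂ`. -/
def vstar (p q : Fin 2 → Hq) : Fin 2 → Hq :=
  ![p 0 * q 0 - p 1 * q 1, p 1 * q 0 + p 0 * q 1]

/-- `Ω` is slice-open: a subset of `Hqₛⁿ` all of whose slices are open. -/
def SliceOpen {n : ℕ} (Ω : Set (Fin n → Hq)) : Prop :=
  Ω ⊆ HSn n ∧ ∀ I ∈ Sph, IsOpen {z : Fin n → ℂ | liftMap I z ∈ Ω}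

/-- `Ω` is slice-connected. -/
def SliceConnected {n : ℕ} (Ω : Set (Fin n → Hq)) : Prop :=
  ∀ U V : Set (Fin n → Hq), SliceOpen U → SliceOpen V → Ω ⊆ U ∪ V →
    (Ω ∩ U).Nonempty → (Ω ∩ V).Nonempty → (Ω ∩ U ∩ V).Nonempty

/-- `Ω` is a slice-domain. -/
def SliceDomain {n : ℕ} (Ω : Set (Fin n → Hq)) : Prop :=
  SliceOpen Ω ∧ SliceConnected Ω

/-- `Ω` is self-stem-preserving. -/
def SelfStemPreserving {n : ℕ} (Ω : Set (Fin n → Hq)) : Prop :=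
  RealPathConnected Ω ∧ StemPreserving Ω Ω

/-- `Ω` is open in the Euclidean subspace topology of `Hqₛⁿ`. -/
def EuclideanOpenIn {n : ℕ} (Ω : Set (Fin n → Hq)) : Prop :=
  ∃ U : Set (Fin n → Hq), IsOpen U ∧ Ω = U ∩ HSn n

/-- `Ω` is weakly axially symmetric. -/
def WeaklyAxiallySymmetric {n : ℕ} (Ω : Set (Fin n → Hq)) : Prop :=
  ∀ (x y : Fin n → ℝ) (I : Hq), I ∈ Sph →
    (fun k => (x k : Hq) + y k • I) ∈ Ω → (fun k => (x k : Hq) - y k • I) ∈ Ω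
lemma mem_sph_iff {I : Hq} : I ∈ Sph ↔ I.re = 0 ∧ I.imI^2 + I.imJ^2 + I.imK^2 = 1 := by
  constructor
  · intro h
    have h' : I * I = -1 := by rw [← sq]; exact h
    have hre := congrArg QuaternionAlgebra.re h'
    have hi := congrArg QuaternionAlgebra.imI h'
    have hj := congrArg QuaternionAlgebra.imJ h'
    have hk := congrArg QuaternionAlgebra.imK h'
    simp [Quaternion.re_mul, Quaternion.imI_mul, Quaternion.imJ_mul, Quaternion.imK_mul] at hre hi hj hk
    have hre0 : I.re = 0 := by nlinarith [sq_nonneg I.re, sq_nonneg I.imI, sq_nonneg I.imJ, sq_nonneg I.imK]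
    refine ⟨hre0, by nlinarith⟩
  · rintro ⟨h0, h1⟩
    show I^2 = -1
    rw [sq]
    ext <;> simp [Quaternion.re_mul, Quaternion.imI_mul, Quaternion.imJ_mul, Quaternion.imK_mul, h0] <;> nlinarith

lemma sph_nonempty : ∃ I : Hq, I ∈ Sph := by
  refine ⟨⟨0,1,0,0⟩, mem_sph_iff.2 ⟨rfl, by norm_num⟩⟩

lemma sph_ne_zero {I : Hq} (h : I ∈ Sph) : I ≠ 0 := by
  intro h0; rw [h0] at h; simp [Sph] at h

lemma smul_sph_eq {I J : Hq} (hI : I ∈ Sph) (hJ : J ∈ Sph) {a b : ℝ}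
    (h : a • I = b • J) (ha : a ≠ 0) :
    (I = J ∧ a = b) ∨ (I = -J ∧ a = -b) := by
  have hsq : (a • I) * (a • I) = (b • J) * (b • J) := by rw [h]
  have hI2 : I * I = -1 := by rw [← sq]; exact hI
  have hJ2 : J * J = -1 := by rw [← sq]; exact hJ
  rw [smul_mul_smul_comm, smul_mul_smul_comm, hI2, hJ2] at hsq
  have hab : (a*a) = (b*b) := by
    have := congrArg QuaternionAlgebra.re hsq
    simpa using this
  rcases mul_self_eq_mul_self_iff.1 hab with hb | hb
  · left
    refine ⟨?_, hb.symm ▸ rfl⟩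
    · have : a • I = a • J := by rw [h, hb]
      exact smul_right_injective Hq ha this
  · right
    constructor
    · have : a • I = a • (-J) := by rw [h, hb]; simp [smul_neg, neg_smul]
      exact smul_right_injective Hq ha this
    · linarith [hb]

lemma sph_re {I : Hq} (hI : I ∈ Sph) : I.re = 0 := (mem_sph_iff.1 hI).1


lemma psi_re {I : Hq} (hI : I ∈ Sph) (z : ℂ) : (psi I z).re = z.re := by
  simp [psi, Quaternion.re_smul, sph_re hI]

lemma psi_eq_pieces {I J : Hq} (hI : I ∈ Sph) (hJ : J ∈ Sph) {w z : ℂ}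
    (h : psi I w = psi J z) : w.re = z.re ∧ w.im • I = z.im • J := by
  have hre : w.re = z.re := by
    have := congrArg QuaternionAlgebra.re h
    rwa [psi_re hI, psi_re hJ] at this
  refine ⟨hre, ?_⟩
  have : (w.re : Hq) + w.im • I = (z.re : Hq) + z.im • J := h
  rw [hre] at this
  exact add_left_cancel this

lemma psi_conj {J : Hq} (z : ℂ) : psi J (starRingEnd ℂ z) = psi (-J) z := by
  simp [psi, smul_neg, neg_smul, Complex.conj_re, Complex.conj_im]

lemma psi_real {I : Hq} {z : ℂ} (h : z.im = 0) : psi I z = (z.re : Hq) := by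
  simp [psi, h]

lemma continuous_psi (I : Hq) : Continuous fun z : ℂ => psi I z := by
  unfold psi
  exact ((Quaternion.continuous_coe.comp Complex.continuous_re).add
    (Complex.continuous_im.smul continuous_const))

lemma exists_noncomm {I : Hq} (hI : I ∈ Sph) : ∃ e : Hq, e.re = 0 ∧ e * I ≠ I * e := by
  obtain ⟨h0, h1⟩ := mem_sph_iff.1 hI
  by_contra h
  push_neg at h
  have h1' := h ⟨0,1,0,0⟩ rfl
  have h2' := h ⟨0,0,1,0⟩ rfl
  have e1 := congrArg (fun q : Hq => q.imJ) h1'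
  have e2 := congrArg (fun q : Hq => q.imK) h1'
  have e3 := congrArg (fun q : Hq => q.imK) h2'
  erw [Quaternion.imJ_mul, Quaternion.imJ_mul] at e1
  erw [Quaternion.imK_mul, Quaternion.imK_mul] at e2 e3
  simp at e1 e2 e3
  nlinarith [e1, e2, e3]

lemma exists_ne_close {I : Hq} (hI : I ∈ Sph) {ε : ℝ} (hε : 0 < ε) :
    ∃ J ∈ Sph, J ≠ I ∧ ‖J - I‖ < ε := by
  obtain ⟨e, hre, hne⟩ := exists_noncomm hI
  set f : ℝ → Hq := fun θ => (1 + θ • e) * I * (1 + θ • e)⁻¹ with hf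
  have hq : ∀ θ : ℝ, (1 + θ • e) ≠ 0 := by
    intro θ h0
    have := congrArg QuaternionAlgebra.re h0
    simp [Quaternion.re_smul, hre] at this
  have hf0 : f 0 = I := by simp [hf]
  have hcont : ContinuousAt f 0 := by
    have h1 : ContinuousAt (fun θ : ℝ => (1 + θ • e)) 0 := by fun_prop
    have h2 : ContinuousAt (fun θ : ℝ => (1 + θ • e)⁻¹) 0 := h1.inv₀ (hq 0)
    exact (h1.mul continuousAt_const).mul h2
  rw [Metric.continuousAt_iff] at hcont
  obtain ⟨δ, hδ, hd⟩ := hcont ε hε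
  set θ := δ / 2 with hθ
  have hθ0 : θ ≠ 0 := by positivity
  have hclose : ‖f θ - I‖ < ε := by
    have := hd (x := θ) (by rw [Real.dist_eq]; rw [hθ]; simp; rw [abs_of_pos (by positivity)]; linarith)
    rwa [hf0, dist_eq_norm] at this
  have hI2 : I * I = -1 := by rw [← sq]; exact hI
  refine ⟨f θ, ?_, ?_, hclose⟩
  · show (f θ)^2 = -1
    have hqθ := hq θ
    have h1 : (1 + θ • e)⁻¹ * (1 + θ • e) = 1 := inv_mul_cancel₀ hqθ
    have h2 : (1 + θ • e) * (1 + θ • e)⁻¹ = 1 := mul_inv_cancel₀ hqθ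
    rw [sq, hf]
    calc (1 + θ • e) * I * (1 + θ • e)⁻¹ * ((1 + θ • e) * I * (1 + θ • e)⁻¹)
        = (1 + θ • e) * I * ((1 + θ • e)⁻¹ * (1 + θ • e)) * I * (1 + θ • e)⁻¹ := by
          noncomm_ring
      _ = (1 + θ • e) * (I * I) * (1 + θ • e)⁻¹ := by rw [h1]; noncomm_ring
      _ = -((1 + θ • e) * (1 + θ • e)⁻¹) := by rw [hI2]; noncomm_ring
      _ = -1 := by rw [h2]
  · intro hJI
    have : (1 + θ • e) * I = I * (1 + θ • e) := by
      have := congrArg (· * (1 + θ • e)) hJI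
      simpa [hf, mul_assoc, inv_mul_cancel₀ (hq θ)] using this
    have hcomm : θ • (e * I) = θ • (I * e) := by
      have h' : 1 * I + θ • e * I = I * 1 + I * (θ • e) := by
        rw [← add_mul, ← mul_add]; exact this
      simp only [one_mul, mul_one] at h'
      have h2 : (θ • e) * I = I * (θ • e) := add_left_cancel h'
      rw [smul_mul_assoc] at h2
      rw [h2, mul_smul_comm]
    exact hne (smul_right_injective Hq hθ0 hcomm)


lemma smul_cancel_sph {a b : ℝ} {J : Hq} (hJ : J ≠ 0) (h : a • J = b • J) : a = b := by
  have : (a - b) • J = 0 := by rw [sub_smul, h, sub_self]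
  rcases smul_eq_zero.1 this with h' | h'
  · linarith [sub_eq_zero.1 (by exact_mod_cast h')]
  · exact absurd h' hJ

lemma liftMap_eq_cases {n : ℕ} {I J : Hq} (hI : I ∈ Sph) (hJ : J ∈ Sph)
    {w z : Fin n → ℂ} (h : liftMap I w = liftMap J z) (hz : ¬ isRealPt z) :
    (I = J ∧ w = z) ∨ (I = -J ∧ w = fun k => starRingEnd ℂ (z k)) := by
  have pieces : ∀ k, (w k).re = (z k).re ∧ (w k).im • I = (z k).im • J := fun k =>
    psi_eq_pieces hI hJ (congrFun h k)
  obtain ⟨k₀, hk₀⟩ : ∃ k, (z k).im ≠ 0 := by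
    by_contra hc; push_neg at hc; exact hz hc
  have hw0 : (w k₀).im ≠ 0 := by
    intro h0
    have := (pieces k₀).2
    rw [h0, zero_smul] at this
    rcases smul_eq_zero.1 this.symm with h' | h'
    · exact hk₀ h'
    · exact sph_ne_zero hJ h'
  rcases smul_sph_eq hI hJ (pieces k₀).2 hw0 with ⟨hIJ, _⟩ | ⟨hIJ, _⟩
  · left
    refine ⟨hIJ, funext fun k => Complex.ext (pieces k).1 ?_⟩
    have := (pieces k).2
    rw [hIJ] at this
    exact smul_cancel_sph (sph_ne_zero hJ) this
  · right
    refine ⟨hIJ, funext fun k => Complex.ext ?_ ?_⟩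
    · simpa [Complex.conj_re] using (pieces k).1
    · have := (pieces k).2
      rw [hIJ] at this
      have h2 : (-(w k).im) • J = (z k).im • J := by
        rw [neg_smul, ← smul_neg]; exact this
      have := smul_cancel_sph (sph_ne_zero hJ) h2
      simp [Complex.conj_im]
      linarith

lemma liftMap_conj {n : ℕ} (J : Hq) (z : Fin n → ℂ) :
    liftMap J (fun k => starRingEnd ℂ (z k)) = liftMap (-J) z := by
  funext k; exact psi_conj (z k)

/-- straight segment as a `Path`. -/
def segPath {n : ℕ} (z w : Fin n → ℂ) : Path z w where
  toFun := fun t => (1 - (t : ℝ)) • z + (t : ℝ) • w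
  continuous_toFun := by
    apply Continuous.add
    · exact (continuous_const.sub continuous_subtype_val).smul continuous_const
    · exact continuous_subtype_val.smul continuous_const
  source' := by simp
  target' := by simp

/-- a continuous map on `unitInterval` as a `Path`. -/
def pathOf {X : Type*} [TopologicalSpace X] (γ : C(unitInterval, X)) : Path (γ 0) (γ 1) where
  toContinuousMap := γ
  source' := rfl
  target' := rfl

/-- The set of reachable points. -/
def Reach {n : ℕ} (Ω : Set (Fin n → Hq)) : Set (Fin n → Hq) :=
  {q | ∃ γ ∈ PathsTo Ω, ∃ I ∈ SUnits Ω γ, liftP γ I 1 = q}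

lemma reach_subset {n : ℕ} (Ω : Set (Fin n → Hq)) : Reach Ω ⊆ Ω := by
  rintro q ⟨γ, hγ, I, hI, h1⟩
  rw [← h1]; exact hI.2 1

lemma real_mem_reach {n : ℕ} {Ω : Set (Fin n → Hq)} {q : Fin n → Hq}
    (hq : q ∈ Ω) (hreal : isRealH q) : q ∈ Reach Ω := by
  obtain ⟨I, hI⟩ := sph_nonempty
  set z : Fin n → ℂ := fun k => ((q k).re : ℂ) with hz
  have hlift : liftMap I z = q := by
    funext k
    show psi I ((q k).re : ℂ) = q k
    rw [psi_real (by simp)]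
    rw [Complex.ofReal_re]
    exact (hreal k).symm
  set γ : C(unitInterval, Fin n → ℂ) := ContinuousMap.const _ z with hγ
  have hSU : I ∈ SUnits Ω γ := ⟨hI, fun t => by show liftMap I z ∈ Ω; rw [hlift]; exact hq⟩
  exact ⟨γ, ⟨fun k => by simp [hγ, hz], ⟨I, hSU⟩⟩, I, hSU, by show liftMap I z = q; exact hlift⟩

lemma reach_extend {n : ℕ} {Ω : Set (Fin n → Hq)} {J : Hq} (hJ : J ∈ Sph)
    {z₀ z₁ : Fin n → ℂ}
    (hseg : ∀ t : unitInterval, liftMap J ((1 - (t : ℝ)) • z₀ + (t : ℝ) • z₁) ∈ Ω)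
    (h0 : liftMap J z₀ ∈ Reach Ω) : liftMap J z₁ ∈ Reach Ω := by
  have key : ∀ γ' : C(unitInterval, Fin n → ℂ), isRealPt (γ' 0) →
      (∀ t, liftMap J (γ' t) ∈ Ω) → γ' 1 = z₀ → liftMap J z₁ ∈ Reach Ω := by
    intro γ' hr hΩ' hend
    set Γ : Path (γ' 0) z₁ := (pathOf γ').trans (segPath (γ' 1) z₁) with hΓ
    set γc : C(unitInterval, Fin n → ℂ) := Γ.toContinuousMap with hγc
    have happ : ∀ t, γc t = Γ t := fun t => rfl
    have hmem : ∀ t, liftMap J (γc t) ∈ Ω := by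
      intro t
      have hrange : γc t ∈ Set.range ⇑Γ := ⟨t, (happ t).symm⟩
      rw [hΓ, Path.trans_range] at hrange
      rcases hrange with ⟨u, hu⟩ | ⟨u, hu⟩
      · have : γc t = γ' u := by rw [← hu]; rfl
        rw [this]; exact hΩ' u
      · have : γc t = (1 - (u : ℝ)) • (γ' 1) + (u : ℝ) • z₁ := by rw [← hu]; rfl
        rw [this, hend]; exact hseg u
    have h00 : γc 0 = γ' 0 := by rw [happ 0]; exact Γ.source
    have h11 : γc 1 = z₁ := by rw [happ 1]; exact Γ.target
    have hSU : J ∈ SUnits Ω γc := ⟨hJ, fun t => hmem t⟩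
    refine ⟨γc, ⟨by rw [h00]; exact hr, ⟨J, hSU⟩⟩, J, hSU, ?_⟩
    show liftMap J (γc 1) = liftMap J z₁
    rw [h11]
  by_cases hreal : isRealPt z₀
  · refine key (ContinuousMap.const _ z₀) (by simpa using hreal) (fun t => ?_) rfl
    have := hseg 0
    simpa using this
  · obtain ⟨γ, ⟨hst, -⟩, I, ⟨hIS, hIΩ⟩, h1⟩ := h0
    have h1' : liftMap I (γ 1) = liftMap J z₀ := h1
    rcases liftMap_eq_cases hIS hJ h1' hreal with ⟨hIJ, hw⟩ | ⟨hIJ, hw⟩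
    · exact key γ hst (fun t => by rw [← hIJ]; exact hIΩ t) hw
    · refine key (conjPath γ) (fun k => by simp [conjPath, hst k]) (fun t => ?_) ?_
      · show liftMap J (fun k => starRingEnd ℂ (γ t k)) ∈ Ω
        rw [liftMap_conj, ← hIJ]
        exact hIΩ t
      · funext k
        show starRingEnd ℂ (γ 1 k) = z₀ k
        rw [hw]
        simp

lemma reach_all {n : ℕ} {Ω : Set (Fin n → Hq)} (hΩ : SliceDomain Ω)
    (hR : ∃ q ∈ Ω, isRealH q) : Ω ⊆ Reach Ω := by
  by_contra hc
  rw [Set.not_subset] at hc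
  obtain ⟨q, hqΩ, hqA⟩ := hc
  set A := Reach Ω with hA
  set B := Ω \ A with hB
  have sliceA : SliceOpen A := by
    refine ⟨(reach_subset Ω).trans hΩ.1.1, fun J hJ => ?_⟩
    rw [Metric.isOpen_iff]
    intro z₀ hz₀
    have hz₀Ω : z₀ ∈ {z | liftMap J z ∈ Ω} := reach_subset Ω hz₀
    obtain ⟨r, rpos, hball⟩ := Metric.isOpen_iff.1 (hΩ.1.2 J hJ) z₀ hz₀Ω
    refine ⟨r, rpos, fun z₁ hz₁ => ?_⟩
    refine reach_extend hJ (fun t => hball ?_) hz₀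
    exact (convex_ball z₀ r) (Metric.mem_ball_self rpos) hz₁
      (by linarith [t.2.2] : (0:ℝ) ≤ 1 - (t:ℝ)) t.2.1 (by ring)
  have sliceB : SliceOpen B := by
    refine ⟨(Set.diff_subset.trans hΩ.1.1), fun J hJ => ?_⟩
    rw [Metric.isOpen_iff]
    intro z₀ hz₀
    obtain ⟨r, rpos, hball⟩ := Metric.isOpen_iff.1 (hΩ.1.2 J hJ) z₀ hz₀.1
    refine ⟨r, rpos, fun z₁ hz₁ => ⟨hball hz₁, fun hz₁A => hz₀.2 ?_⟩⟩
    refine reach_extend hJ (fun t => hball ?_) hz₁A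
    exact (convex_ball z₀ r) hz₁ (Metric.mem_ball_self rpos)
      (by linarith [t.2.2] : (0:ℝ) ≤ 1 - (t:ℝ)) t.2.1 (by ring)
  obtain ⟨qr, hqr, hqreal⟩ := hR
  have hcover : Ω ⊆ A ∪ B := fun x hx => by
    by_cases h : x ∈ A
    · exact Or.inl h
    · exact Or.inr ⟨hx, h⟩
  have hAne : (Ω ∩ A).Nonempty := ⟨qr, hqr, real_mem_reach hqr hqreal⟩
  have hBne : (Ω ∩ B).Nonempty := ⟨q, hqΩ, hqΩ, hqA⟩
  obtain ⟨x, ⟨-, hxA⟩, hxB⟩ := hΩ.2 A B sliceA sliceB hcover hAne hBne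
  exact hxB.2 hxA

lemma exists_im_bound {n : ℕ} (γ : C(unitInterval, Fin n → ℂ)) :
    ∃ M : ℝ, 0 ≤ M ∧ ∀ (t : unitInterval) (k : Fin n), |((γ t) k).im| ≤ M := by
  obtain ⟨M, hM⟩ := (isCompact_range (γ.continuous.norm)).bddAbove
  refine ⟨max M 0, le_max_right _ _, fun t k => ?_⟩
  have h1 : |((γ t) k).im| ≤ ‖γ t k‖ := Complex.abs_im_le_norm _
  have h3 : ‖γ t k‖ ≤ ‖γ t‖ := norm_le_pi_norm _ k
  have h4 : ‖γ t‖ ≤ M := hM ⟨t, rfl⟩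
  have h2 : ‖γ t k‖ = ‖γ t k‖ := rfl
  calc |((γ t) k).im| ≤ ‖γ t k‖ := by rw [← h2]; exact h1
    _ ≤ M := le_trans h3 h4
    _ ≤ max M 0 := le_max_left _ _

lemma sunits_nhd {n : ℕ} {Ω : Set (Fin n → Hq)} (hE : EuclideanOpenIn Ω)
    (γ : C(unitInterval, Fin n → ℂ)) {I : Hq} (hI : I ∈ SUnits Ω γ) :
    ∃ ε > 0, ∀ J ∈ Sph, ‖J - I‖ < ε → J ∈ SUnits Ω γ := by
  obtain ⟨U, hU, hΩU⟩ := hE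
  have hcontI : Continuous fun t => liftP γ I t := by
    apply continuous_pi
    intro k
    exact (continuous_psi I).comp ((continuous_apply k).comp γ.continuous)
  have hK : IsCompact (Set.range fun t => liftP γ I t) := isCompact_range hcontI
  have hKU : (Set.range fun t => liftP γ I t) ⊆ U := by
    rintro x ⟨t, rfl⟩
    have := hI.2 t
    rw [hΩU] at this
    exact this.1
  obtain ⟨δ, δpos, hthick⟩ := hK.exists_thickening_subset_open hU hKU
  obtain ⟨M, hM0, hMb⟩ := exists_im_bound γ
  refine ⟨δ / (M + 1), by positivity, fun J hJ hclose => ?_⟩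
  refine ⟨hJ, fun t => ?_⟩
  have hd : dist (liftP γ J t) (liftP γ I t) ≤ M * ‖J - I‖ := by
    rw [dist_pi_le_iff (mul_nonneg hM0 (norm_nonneg _))]
    intro k
    show dist (psi J (γ t k)) (psi I (γ t k)) ≤ _
    rw [dist_eq_norm]
    have hdiff : psi J (γ t k) - psi I (γ t k) = ((γ t) k).im • (J - I) := by
      simp only [psi, smul_sub]
      abel
    rw [hdiff, norm_smul, Real.norm_eq_abs]
    exact mul_le_mul_of_nonneg_right (hMb t k) (norm_nonneg _)
  rw [hΩU]
  constructor
  · apply hthick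
    rw [Metric.mem_thickening_iff]
    refine ⟨liftP γ I t, ⟨t, rfl⟩, ?_⟩
    have hXX : M * ‖J - I‖ < δ := by
      have h1 : M * ‖J - I‖ ≤ M * (δ / (M + 1)) :=
        mul_le_mul_of_nonneg_left (le_of_lt hclose) hM0
      have h2 : M * (δ / (M + 1)) < δ := by
        rw [mul_div_assoc', div_lt_iff₀ (by positivity : (0:ℝ) < M + 1)]
        nlinarith
      linarith
    linarith
  · exact ⟨J, hJ, γ t, rfl⟩

/-- a Euclidean-open slice-domain meeting `ℝⁿ` is
self-stem-preserving. -/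
theorem euclideanOpen_sliceDomain_selfStemPreserving {n : ℕ} (Ω : Set (Fin n → Hq))
    (hE : EuclideanOpenIn Ω) (hΩ : SliceDomain Ω) (hR : ∃ q ∈ Ω, isRealH q) :
    SelfStemPreserving Ω := by
  constructor
  · intro q hq
    exact reach_all hΩ hR hq
  · constructor
    · intro γ hγ
      obtain ⟨hr, I, hI⟩ := hγ
      obtain ⟨ε, hε, hnear⟩ := sunits_nhd hE γ hI
      obtain ⟨J, hJs, hJne, hJcl⟩ := exists_ne_close hI.1 hε
      exact ⟨I, hI, J, hnear J hJs hJcl, fun h => hJne h.symm⟩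
    · intro α hα β hβ h1 I hI
      obtain ⟨εa, hεa, hneara⟩ := sunits_nhd hE α hI.1
      obtain ⟨εb, hεb, hnearb⟩ := sunits_nhd hE β hI.2
      obtain ⟨J, hJs, hJne, hJcl⟩ := exists_ne_close hI.1.1 (lt_min hεa hεb)
      exact ⟨J, ⟨hneara J hJs (hJcl.trans_le (min_le_left _ _)),
        hnearb J hJs (hJcl.trans_le (min_le_right _ _))⟩, hJne⟩
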